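/- For every integer s ≥ 0, the space (ℙ_s)³ decomposes as the direct sum of grad(ℙ_{s+1}) and {x ↦ x × p(x) : p ∈ (ℙ_{s-1})³}, where ℙ_{-1} = {0}. -/

import Mathlib

open MvPolynomial

noncomputable section

abbrev P3 := MvPolynomial (Fin 3) ℝ

/-- `ℙ_n`, polynomials of total degree ≤ n, with `ℙ_n = {0}` for `n < 0`. -/
def Pdeg3 (n : ℤ) : Submodule ℝ P3 :=
  if n < 0 then ⊥ else restrictTotalDegree (Fin 3) ℝ n.toNat

/-- `(ℙ_n)³`. -/
def Ps3vec (n : ℤ) : Submodule ℝ (Fin 3 → P3) :=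
  Submodule.pi Set.univ (fun _ => Pdeg3 n)

def pd3 (i : Fin 3) : P3 →ₗ[ℝ] P3 := (pderiv i : Derivation ℝ P3 P3).toLinearMap

def pr3 (i : Fin 3) : (Fin 3 → P3) →ₗ[ℝ] P3 := LinearMap.proj i

/-- The gradient on scalar polynomials, as a linear map. -/
def grad3LM : P3 →ₗ[ℝ] (Fin 3 → P3) := LinearMap.pi ![pd3 0, pd3 1, pd3 2]

/-- `p ↦ (x ↦ x × p(x))` as a linear map on polynomial vector fields. -/
def crossXLM : (Fin 3 → P3) →ₗ[ℝ] (Fin 3 → P3) :=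
  LinearMap.pi ![LinearMap.mulLeft ℝ (X 1) ∘ₗ pr3 2 - LinearMap.mulLeft ℝ (X 2) ∘ₗ pr3 1,
                 LinearMap.mulLeft ℝ (X 2) ∘ₗ pr3 0 - LinearMap.mulLeft ℝ (X 0) ∘ₗ pr3 2,
                 LinearMap.mulLeft ℝ (X 0) ∘ₗ pr3 1 - LinearMap.mulLeft ℝ (X 1) ∘ₗ pr3 0]

/-! ### Auxiliary lemmas -/

lemma grad3LM_apply (f : P3) : grad3LM f = ![pderiv 0 f, pderiv 1 f, pderiv 2 f] := by
  funext i; fin_cases i <;> rfl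

lemma crossXLM_apply (w : Fin 3 → P3) :
    crossXLM w = ![X 1 * w 2 - X 2 * w 1, X 2 * w 0 - X 0 * w 2, X 0 * w 1 - X 1 * w 0] := by
  funext i; fin_cases i <;> rfl

lemma sum_eq_degree (d : Fin 3 →₀ ℕ) : (d.sum fun _ e => e) = d.degree := rfl

lemma deg3 (d : Fin 3 →₀ ℕ) : d.degree = d 0 + d 1 + d 2 := by
  rw [Finsupp.degree_apply, Finset.sum_subset (Finset.subset_univ d.support)
    (fun x _ hx => Finsupp.notMem_support_iff.mp hx), Fin.sum_univ_three]

/-- The Euler operator `p ↦ x · ∇p` as a linear map. -/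
def EopLM : P3 →ₗ[ℝ] P3 :=
  LinearMap.mulLeft ℝ (X 0) ∘ₗ pd3 0 + LinearMap.mulLeft ℝ (X 1) ∘ₗ pd3 1 +
    LinearMap.mulLeft ℝ (X 2) ∘ₗ pd3 2

lemma EopLM_apply (p : P3) :
    EopLM p = X 0 * pderiv 0 p + X 1 * pderiv 1 p + X 2 * pderiv 2 p := rfl

lemma X_mul_pderiv_monomial (j : Fin 3) (e : Fin 3 →₀ ℕ) (c : ℝ) :
    X j * pderiv j (monomial e c) = (e j : ℝ) • monomial e c := by
  rw [pderiv_monomial]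
  by_cases h : e j = 0
  · simp [h]
  · rw [← pow_one (X j : P3), ← monomial_single_add]
    rw [smul_monomial]
    congr 1
    · rw [add_comm, tsub_add_cancel_of_le]
      exact Finsupp.single_le_iff.mpr (by omega)
    · rw [mul_comm, smul_eq_mul, mul_comm]

lemma EopLM_monomial (e : Fin 3 →₀ ℕ) (c : ℝ) :
    EopLM (monomial e c) = (e.degree : ℝ) • monomial e c := by
  rw [EopLM_apply, X_mul_pderiv_monomial, X_mul_pderiv_monomial, X_mul_pderiv_monomial,
    ← add_smul, ← add_smul, deg3]
  push_cast
  ring_nf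

lemma coeff_EopLM (p : P3) (d : Fin 3 →₀ ℕ) :
    coeff d (EopLM p) = (d.degree : ℝ) * coeff d p := by
  induction p using MvPolynomial.induction_on' with
  | monomial e c =>
    rw [EopLM_monomial, coeff_smul, coeff_monomial, smul_eq_mul]
    by_cases h : e = d
    · subst h; rfl
    · simp [h]
  | add p q hp hq => rw [map_add, coeff_add, coeff_add, hp, hq, mul_add]

lemma EopLM_isHomogeneous {p : P3} {n : ℕ} (h : p.IsHomogeneous n) :
    EopLM p = (n : ℝ) • p := by
  ext d
  rw [coeff_EopLM, coeff_smul, smul_eq_mul]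
  by_cases hc : coeff d p = 0
  · rw [hc, mul_zero, mul_zero]
  · rw [show d.degree = n from by rw [Finsupp.degree_eq_weight_one]; exact h hc]

lemma totalDegree_pderiv_le (j : Fin 3) (p : P3) (n : ℕ) (h : p.totalDegree ≤ n + 1) :
    (pderiv j p).totalDegree ≤ n := by
  conv_lhs => rw [← support_sum_monomial_coeff p]
  rw [map_sum]
  refine le_trans (totalDegree_finset_sum _ _) (Finset.sup_le fun e he => ?_)
  rw [pderiv_monomial]
  by_cases hej : e j = 0
  · simp [hej]
  · refine le_trans (totalDegree_monomial_le _ _) ?_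
    have hed : e.degree ≤ n + 1 := by
      rw [← sum_eq_degree]
      exact le_trans (le_totalDegree he) h
    have hid : ((e - Finsupp.single j 1).sum fun _ => id) = (e - Finsupp.single j 1).degree := rfl
    rw [hid]
    rw [deg3] at hed
    rw [Finsupp.degree_apply, Finset.sum_subset (Finset.subset_univ _)
      (fun x _ hx => Finsupp.notMem_support_iff.mp hx), Fin.sum_univ_three]
    have h0 : ∀ k : Fin 3, ((e - Finsupp.single j 1 : Fin 3 →₀ ℕ)) k
        = e k - (Finsupp.single j 1 : Fin 3 →₀ ℕ) k :=
      fun k => Finsupp.tsub_apply e (Finsupp.single j 1) k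
    rw [h0 0, h0 1, h0 2]
    fin_cases j <;> simp_all [Finsupp.single_apply] <;> omega

lemma totalDegree_sub_le' (p q : P3) (n : ℕ) (hp : p.totalDegree ≤ n)
    (hq : q.totalDegree ≤ n) : (p - q).totalDegree ≤ n := by
  rw [sub_eq_add_neg]
  refine le_trans (totalDegree_add _ _) (max_le hp ?_)
  rwa [totalDegree_neg]

lemma mem_Pdeg3_natCast {p : P3} (n : ℕ) : p ∈ Pdeg3 (n : ℤ) ↔ p.totalDegree ≤ n := by
  rw [Pdeg3, if_neg (by omega), mem_restrictTotalDegree, Int.toNat_natCast]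

lemma mem_Ps3vec_natCast {v : Fin 3 → P3} (n : ℕ) :
    v ∈ Ps3vec (n : ℤ) ↔ ∀ i, (v i).totalDegree ≤ n := by
  constructor
  · intro h i; exact (mem_Pdeg3_natCast n).mp (h i (Set.mem_univ i))
  · intro h i _; exact (mem_Pdeg3_natCast n).mpr (h i)

lemma compId0 (q0 q1 q2 : P3) :
    pderiv 0 (X 0 * q0 + X 1 * q1 + X 2 * q2)
      + (X 1 * (pderiv 1 q0 - pderiv 0 q1) - X 2 * (pderiv 0 q2 - pderiv 2 q0))
    = q0 + (X 0 * pderiv 0 q0 + X 1 * pderiv 1 q0 + X 2 * pderiv 2 q0) := by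
  simp only [map_add, pderiv_mul, pderiv_X_self, pderiv_X_of_ne (by decide : (1:Fin 3) ≠ 0),
    pderiv_X_of_ne (by decide : (2:Fin 3) ≠ 0), one_mul, zero_mul, mul_sub]
  ring

lemma compId1 (q0 q1 q2 : P3) :
    pderiv 1 (X 0 * q0 + X 1 * q1 + X 2 * q2)
      + (X 2 * (pderiv 2 q1 - pderiv 1 q2) - X 0 * (pderiv 1 q0 - pderiv 0 q1))
    = q1 + (X 0 * pderiv 0 q1 + X 1 * pderiv 1 q1 + X 2 * pderiv 2 q1) := by
  simp only [map_add, pderiv_mul, pderiv_X_self, pderiv_X_of_ne (by decide : (0:Fin 3) ≠ 1),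
    pderiv_X_of_ne (by decide : (2:Fin 3) ≠ 1), one_mul, zero_mul, mul_sub]
  ring

lemma compId2 (q0 q1 q2 : P3) :
    pderiv 2 (X 0 * q0 + X 1 * q1 + X 2 * q2)
      + (X 0 * (pderiv 0 q2 - pderiv 2 q0) - X 1 * (pderiv 2 q1 - pderiv 1 q2))
    = q2 + (X 0 * pderiv 0 q2 + X 1 * pderiv 1 q2 + X 2 * pderiv 2 q2) := by
  simp only [map_add, pderiv_mul, pderiv_X_self, pderiv_X_of_ne (by decide : (0:Fin 3) ≠ 2),
    pderiv_X_of_ne (by decide : (1:Fin 3) ≠ 2), one_mul, zero_mul, mul_sub]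
  ring

/-- `(ℙ_s)³ = grad(ℙ_{s+1}) ⊕ {x ↦ x × p(x) : p ∈ (ℙ_{s-1})³}` (internal direct sum). -/
theorem stmt5 (s : ℕ) :
    (Submodule.map grad3LM (Pdeg3 (s + 1))) ⊓ (Submodule.map crossXLM (Ps3vec (s - 1))) = ⊥ ∧
    (Submodule.map grad3LM (Pdeg3 (s + 1))) ⊔ (Submodule.map crossXLM (Ps3vec (s - 1))) =
      Ps3vec s := by
  have hs1 : ((s : ℤ) + 1) = ((s + 1 : ℕ) : ℤ) := by push_cast; ring
  constructor
  · -- intersection is trivial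
    rw [eq_bot_iff]
    rintro u ⟨⟨f, hf, rfl⟩, w, hw, hwe⟩
    rw [Submodule.mem_bot]
    have c0 : crossXLM w 0 = X 1 * w 2 - X 2 * w 1 := rfl
    have c1 : crossXLM w 1 = X 2 * w 0 - X 0 * w 2 := rfl
    have c2 : crossXLM w 2 = X 0 * w 1 - X 1 * w 0 := rfl
    have g0 : grad3LM f 0 = pderiv 0 f := rfl
    have g1 : grad3LM f 1 = pderiv 1 f := rfl
    have g2 : grad3LM f 2 = pderiv 2 f := rfl
    have hE : EopLM f = 0 := by
      rw [EopLM_apply, ← g0, ← g1, ← g2, ← hwe, c0, c1, c2]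
      ring
    have hfC : f = C (coeff 0 f) := by
      ext d
      rw [coeff_C]
      by_cases hd : d = 0
      · subst hd; simp
      · rw [if_neg (Ne.symm hd)]
        have h1 := coeff_EopLM f d
        rw [hE, coeff_zero] at h1
        have hdeg : d.degree ≠ 0 := fun hc => hd ((Finsupp.degree_eq_zero_iff d).mp hc)
        have : (d.degree : ℝ) ≠ 0 := Nat.cast_ne_zero.mpr hdeg
        rcases mul_eq_zero.mp h1.symm with h | h
        · exact absurd h this
        · exact h
    rw [hfC, grad3LM_apply]
    simp only [pderiv_C]
    funext i; fin_cases i <;> rfl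
  · apply le_antisymm
    · apply sup_le
      · rintro u ⟨f, hf, rfl⟩
        simp only [SetLike.mem_coe] at hf
        rw [hs1, mem_Pdeg3_natCast] at hf
        rw [mem_Ps3vec_natCast]
        intro i
        rw [grad3LM_apply]
        fin_cases i
        · exact totalDegree_pderiv_le 0 f s hf
        · exact totalDegree_pderiv_le 1 f s hf
        · exact totalDegree_pderiv_le 2 f s hf
      · rintro u ⟨w, hw, rfl⟩
        rcases Nat.eq_zero_or_pos s with hs | hs
        · subst hs
          have hb : Pdeg3 ((0 : ℕ) - 1) = ⊥ := by
            rw [show ((0 : ℕ) : ℤ) - 1 = -1 by norm_num, Pdeg3, if_pos (by norm_num)]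
          have hw0 : ∀ i, w i = 0 := by
            intro i
            have h2 := hw i (Set.mem_univ i)
            simpa [hb, Pdeg3] using h2
          have : w = 0 := funext hw0
          rw [this, map_zero]
          exact Submodule.zero_mem _
        · obtain ⟨k, rfl⟩ : ∃ k, s = k + 1 := ⟨s - 1, by omega⟩
          have hsk : ((k + 1 : ℕ) : ℤ) - 1 = (k : ℕ) := by push_cast; ring
          simp only [SetLike.mem_coe] at hw
          rw [hsk, mem_Ps3vec_natCast] at hw
          rw [mem_Ps3vec_natCast]
          intro i
          have hb : ∀ a b c d : Fin 3, (X a * w b - X c * w d : P3).totalDegree ≤ k + 1 := by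
            intro a b c d
            refine totalDegree_sub_le' _ _ _ ?_ ?_ <;>
              refine le_trans (totalDegree_mul _ _) ?_ <;>
              rw [totalDegree_X] <;> [have := hw b; have := hw d] <;> omega
          rw [crossXLM_apply]
          fin_cases i
          · exact hb 1 2 2 1
          · exact hb 2 0 0 2
          · exact hb 0 1 1 0
    · -- Ps3vec s ≤ sup
      intro v hv
      rw [mem_Ps3vec_natCast] at hv
      set q : Fin 3 → P3 :=
        fun i => ∑ r ∈ Finset.range (s + 1), ((r : ℝ) + 1)⁻¹ • homogeneousComponent r (v i)
        with hqdef
      have hqdeg : ∀ i, (q i).totalDegree ≤ s := by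
        intro i
        refine le_trans (totalDegree_finset_sum _ _) (Finset.sup_le fun r hr => ?_)
        refine le_trans (totalDegree_smul_le _ _)
          (le_trans (homogeneousComponent_isHomogeneous r (v i)).totalDegree_le ?_)
        exact Nat.lt_succ_iff.mp (Finset.mem_range.mp hr)
      have hqmain : ∀ i, q i + EopLM (q i) = v i := by
        intro i
        rw [hqdef]
        simp only
        rw [map_sum, ← Finset.sum_add_distrib]
        have hterm : ∀ r ∈ Finset.range (s + 1),
            (((r : ℝ) + 1)⁻¹ • homogeneousComponent r (v i))
              + EopLM (((r : ℝ) + 1)⁻¹ • homogeneousComponent r (v i))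
            = homogeneousComponent r (v i) := by
          intro r _
          rw [map_smul, EopLM_isHomogeneous (homogeneousComponent_isHomogeneous r (v i)),
            smul_smul, ← add_smul,
            show ((r : ℝ) + 1)⁻¹ + ((r : ℝ) + 1)⁻¹ * (r : ℝ) = 1 by
              field_simp
              ring,
            one_smul]
        rw [Finset.sum_congr rfl hterm]
        conv_rhs => rw [← sum_homogeneousComponent (v i)]
        exact (Finset.sum_subset (Finset.range_subset_range.mpr (by have := hv i; omega))
          (fun r _ hr => homogeneousComponent_eq_zero _ _
            (by simp only [Finset.mem_range] at hr; omega))).symm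
      refine Submodule.mem_sup.mpr
        ⟨grad3LM (X 0 * q 0 + X 1 * q 1 + X 2 * q 2), ?_,
         crossXLM ![pderiv 2 (q 1) - pderiv 1 (q 2), pderiv 0 (q 2) - pderiv 2 (q 0),
           pderiv 1 (q 0) - pderiv 0 (q 1)], ?_, ?_⟩
      · refine Submodule.mem_map_of_mem ?_
        rw [hs1, mem_Pdeg3_natCast]
        have hm : ∀ j : Fin 3, (X j * q j : P3).totalDegree ≤ s + 1 := fun j =>
          le_trans (totalDegree_mul _ _) (by rw [totalDegree_X]; have := hqdeg j; omega)
        exact le_trans (totalDegree_add _ _)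
          (max_le (le_trans (totalDegree_add _ _) (max_le (hm 0) (hm 1))) (hm 2))
      · refine Submodule.mem_map_of_mem ?_
        rcases Nat.eq_zero_or_pos s with hs | hs
        · subst hs
          have hq0 : ∀ i j : Fin 3, pderiv j (q i) = 0 := by
            intro i j
            rw [hqdef]
            simp only [zero_add, Finset.sum_range_one, Nat.cast_zero, homogeneousComponent_zero]
            rw [Derivation.map_smul, pderiv_C, smul_zero]
          have hz : (![pderiv 2 (q 1) - pderiv 1 (q 2), pderiv 0 (q 2) - pderiv 2 (q 0),
              pderiv 1 (q 0) - pderiv 0 (q 1)] : Fin 3 → P3) = 0 := by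
            funext i; fin_cases i <;> simp [hq0]
          rw [hz]
          exact Submodule.zero_mem _
        · obtain ⟨k, rfl⟩ : ∃ k, s = k + 1 := ⟨s - 1, by omega⟩
          have hsk : ((k + 1 : ℕ) : ℤ) - 1 = (k : ℕ) := by push_cast; ring
          rw [hsk, mem_Ps3vec_natCast]
          intro i
          have hd : ∀ a b c d : Fin 3,
              (pderiv a (q b) - pderiv c (q d) : P3).totalDegree ≤ k :=
            fun a b c d => totalDegree_sub_le' _ _ _
              (totalDegree_pderiv_le a _ k (hqdeg b))
              (totalDegree_pderiv_le c _ k (hqdeg d))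
          fin_cases i
          · exact hd 2 1 1 2
          · exact hd 0 2 2 0
          · exact hd 1 0 0 1
      · rw [grad3LM_apply, crossXLM_apply]
        funext i
        fin_cases i
        · show pderiv 0 (X 0 * q 0 + X 1 * q 1 + X 2 * q 2)
            + (X 1 * (pderiv 1 (q 0) - pderiv 0 (q 1))
               - X 2 * (pderiv 0 (q 2) - pderiv 2 (q 0))) = v 0
          rw [compId0, ← EopLM_apply, hqmain]
        · show pderiv 1 (X 0 * q 0 + X 1 * q 1 + X 2 * q 2)
            + (X 2 * (pderiv 2 (q 1) - pderiv 1 (q 2))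
               - X 0 * (pderiv 1 (q 0) - pderiv 0 (q 1))) = v 1
          rw [compId1, ← EopLM_apply, hqmain]
        · show pderiv 2 (X 0 * q 0 + X 1 * q 1 + X 2 * q 2)
            + (X 0 * (pderiv 0 (q 2) - pderiv 2 (q 0))
               - X 1 * (pderiv 2 (q 1) - pderiv 1 (q 2))) = v 2
          rw [compId2, ← EopLM_apply, hqmain]
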